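/- arXiv:math-ph/0507064 — 2 statements merged into one kernel-verified Lean document; each statement's English description precedes it below -/
import Mathlib

section
/- Let M ≥ 0, α ∈ ℝ, and f, g : ℝ → ℝ. Assume that B ↦ f(B) − M·B² is concave on ℝ, so that the one-sided derivatives f'₊(B) and f'₋(B) exist at every B ∈ ℝ. Assume that for every ε ∈ (−1,1) one has g(β+ε) − g(β) → 0 as β → +∞, and that f(B) − (α·B + g(B)) → 0 as B → +∞. Then f'₊(B) → α and f'₋(B) → α as B → +∞. -/
open MeasureTheory Filter Set Topology

noncomputable section

namespace SC

/-- The plane `ℝ²`. -/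
abbrev Plane := ℝ × ℝ

/-- Squared Euclidean norm on the plane. -/
def esq (v : Plane) : ℝ := v.1 ^ 2 + v.2 ^ 2

/-- Euclidean dot product on the plane. -/
def dot2 (v w : Plane) : ℝ := v.1 * w.1 + v.2 * w.2

/-- The reference vector potential `F₀(x) = (-x₂/2, x₁/2)`, with `curl F₀ = 1`. -/
def F0 : Plane → Plane := fun x => (-x.2 / 2, x.1 / 2)

/-- `u` is of class `Cⁿ` on a neighborhood of the closure of `Ω`. -/
def CNearCl {E : Type*} [NormedAddCommGroup E] [NormedSpace ℝ E]
    (n : ℕ) (Ω : Set Plane) (u : Plane → E) : Prop :=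
  ∃ U : Set Plane, IsOpen U ∧ closure Ω ⊆ U ∧ ContDiffOn ℝ n u U

/-- The pointwise squared magnetic gradient `|(-i∇ - B·A)u|²`. -/
def magSq (B : ℝ) (A : Plane → Plane) (u : Plane → ℂ) (x : Plane) : ℝ :=
  ‖(-Complex.I) * fderiv ℝ u x ((1 : ℝ), (0 : ℝ)) - ((B * (A x).1 : ℝ) : ℂ) * u x‖ ^ 2 +
  ‖(-Complex.I) * fderiv ℝ u x ((0 : ℝ), (1 : ℝ)) - ((B * (A x).2 : ℝ) : ℂ) * u x‖ ^ 2

/-- `curl A = ∂₁A₂ - ∂₂A₁`. -/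
def curl2 (A : Plane → Plane) (x : Plane) : ℝ :=
  fderiv ℝ (fun y => (A y).2) x ((1 : ℝ), (0 : ℝ)) -
    fderiv ℝ (fun y => (A y).1) x ((0 : ℝ), (1 : ℝ))

/-- The variational ground state energy `λ₁(B·A)` of the magnetic Neumann Laplacian. -/
def lam1A (Ω : Set Plane) (B : ℝ) (A : Plane → Plane) : ℝ :=
  sInf { r : ℝ | ∃ u : Plane → ℂ, CNearCl 1 Ω u ∧ (∫ x in Ω, ‖u x‖ ^ 2) ≠ 0 ∧
    r = (∫ x in Ω, magSq B A u x) / (∫ x in Ω, ‖u x‖ ^ 2) }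

/-- `λ₁(B) = λ₁(B·F₀)`. -/
def lam1 (Ω : Set Plane) (B : ℝ) : ℝ := lam1A Ω B F0

/-- The Ginzburg–Landau energy functional. -/
def GLenergy (Ω : Set Plane) (κ H : ℝ) (ψ : Plane → ℂ) (A : Plane → Plane) : ℝ :=
  ∫ x in Ω, (magSq (κ * H) A ψ x - κ ^ 2 * ‖ψ x‖ ^ 2 + κ ^ 2 / 2 * ‖ψ x‖ ^ 4
    + κ ^ 2 * H ^ 2 * (curl2 A x - 1) ^ 2)

/-- Admissible Ginzburg–Landau configurations. -/
def GLadm (Ω : Set Plane) (ψ : Plane → ℂ) (A : Plane → Plane) : Prop :=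
  CNearCl 1 Ω ψ ∧ CNearCl 1 Ω A

/-- The normal state is a minimizer at `(κ, H)`. -/
def NormalMin (Ω : Set Plane) (κ H : ℝ) : Prop :=
  ∀ ψ A, GLadm Ω ψ A → 0 ≤ GLenergy Ω κ H ψ A

/-- The normal state is the unique minimizer at `(κ, H)`. -/
def NormalUnique (Ω : Set Plane) (κ H : ℝ) : Prop :=
  NormalMin Ω κ H ∧
  ∀ ψ A, GLadm Ω ψ A → (∫ x in Ω, ‖ψ x‖ ^ 2) ≠ 0 → 0 < GLenergy Ω κ H ψ A

/-- `(ψ, A)` is a minimizer of the Ginzburg–Landau energy at `(κ, H)`. -/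
def IsGLMin (Ω : Set Plane) (κ H : ℝ) (ψ : Plane → ℂ) (A : Plane → Plane) : Prop :=
  GLadm Ω ψ A ∧ ∀ ψ' A', GLadm Ω ψ' A' → GLenergy Ω κ H ψ A ≤ GLenergy Ω κ H ψ' A'

/-- Lower global critical field. -/
def HC3low (Ω : Set Plane) (κ : ℝ) : ℝ := sInf {H : ℝ | 0 < H ∧ NormalMin Ω κ H}

/-- Upper global critical field. -/
def HC3up (Ω : Set Plane) (κ : ℝ) : ℝ :=
  sInf {H : ℝ | 0 < H ∧ ∀ H', H < H' → NormalUnique Ω κ H'}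

/-- Lower local critical field. -/
def HlocLow (Ω : Set Plane) (κ : ℝ) : ℝ :=
  sInf {H : ℝ | 0 < H ∧ κ ^ 2 ≤ lam1 Ω (κ * H)}

/-- Upper local critical field. -/
def HlocUp (Ω : Set Plane) (κ : ℝ) : ℝ :=
  sInf {H : ℝ | 0 < H ∧ ∀ H', H < H' → κ ^ 2 ≤ lam1 Ω (κ * H')}

/-- The inward unit normal `ν(s) = (-γ₂'(s), γ₁'(s))`. -/
def nuVec (γ : ℝ → Plane) (s : ℝ) : Plane := (-(deriv γ s).2, (deriv γ s).1)

/-- The curvature `k(s) = ⟨γ''(s), ν(s)⟩`. -/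
def curvOf (γ : ℝ → Plane) (s : ℝ) : ℝ := dot2 (deriv (deriv γ) s) (nuVec γ s)

/-- The maximal curvature. -/
def kmaxOf (γ : ℝ → Plane) : ℝ := sSup (Set.range (curvOf γ))

/-- A smooth counterclockwise arclength parametrization of the boundary of `Ω`. -/
structure BoundaryParam (Ω : Set Plane) where
  γ : ℝ → Plane
  L : ℝ
  L_pos : 0 < L
  smooth : ContDiff ℝ (⊤ : ℕ∞) γ
  periodic : Function.Periodic γ L
  unit_speed : ∀ s, esq (deriv γ s) = 1
  injOn : Set.InjOn γ (Set.Ico 0 L)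
  range_eq : Set.range γ = frontier Ω
  inward : ∀ s, ∃ ε > 0, ∀ t ∈ Set.Ioo (0 : ℝ) ε, γ s + t • nuVec γ s ∈ Ω

/-- The non-degeneracy assumption: finitely many points of maximal curvature,
all of them non-degenerate maxima. -/
def NonDegen {Ω : Set Plane} (P : BoundaryParam Ω) : Prop :=
  ∃ (N : ℕ) (s : Fin N → ℝ), 0 < N ∧ (∀ j, s j ∈ Set.Ico 0 P.L) ∧
    (∀ j, curvOf P.γ (s j) = kmaxOf P.γ) ∧
    (∀ t ∈ Set.Ico 0 P.L, (∀ j, t ≠ s j) → curvOf P.γ t < kmaxOf P.γ) ∧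
    (∀ j, deriv (deriv (curvOf P.γ)) (s j) < 0)

/-- The ground state energy `μ(ζ)` of the de Gennes half-line model operator. -/
def muGen (ζ : ℝ) : ℝ :=
  sInf { r : ℝ | ∃ φ : ℝ → ℝ, ContDiff ℝ 1 φ ∧ HasCompactSupport φ ∧
    (∃ τ, 0 < τ ∧ φ τ ≠ 0) ∧
    r = (∫ τ in Set.Ioi (0 : ℝ), ((deriv φ τ) ^ 2 + (τ + ζ) ^ 2 * (φ τ) ^ 2)) /
        (∫ τ in Set.Ioi (0 : ℝ), (φ τ) ^ 2) }

/-- The de Gennes constant `Θ₀`. -/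
def Theta0 : ℝ := sInf (Set.range muGen)

/-- Standard facts about the de Gennes constant, taken as hypotheses. -/
structure DeGennes where
  ξ₀ : ℝ
  u₀ : ℝ → ℝ
  theta_lb : 1 / 2 < Theta0
  theta_ub : Theta0 < 1
  ξ₀_mem : ξ₀ ∈ Set.Ioo (-1 : ℝ) 0
  ξ₀_min : muGen ξ₀ = Theta0
  ξ₀_uniq : ∀ ζ, muGen ζ = Theta0 → ζ = ξ₀
  ξ₀_sq : ξ₀ ^ 2 = Theta0
  u₀_pos : ∀ τ, 0 ≤ τ → 0 < u₀ τ
  u₀_smooth : ContDiffOn ℝ 2 u₀ (Set.Ici 0)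
  u₀_sq_int : IntegrableOn (fun τ => (u₀ τ) ^ 2) (Set.Ioi 0)
  u₀_normalized : (∫ τ in Set.Ioi (0 : ℝ), (u₀ τ) ^ 2) = 1
  u₀_neumann : derivWithin u₀ (Set.Ici 0) 0 = 0
  u₀_ode : ∀ τ ∈ Set.Ioi (0 : ℝ),
    -(deriv (deriv u₀) τ) + (τ + ξ₀) ^ 2 * u₀ τ = Theta0 * u₀ τ

/-- The universal constant `C₁ = u₀(0)²/3`. -/
def DeGennes.C1 (D : DeGennes) : ℝ := (D.u₀ 0) ^ 2 / 3

/-- Condition (★) on a vector field `A` at field strength `B` with constant `C₀`. -/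
def StarCond (Ω : Set Plane) (C₀ B : ℝ) (A : Plane → Plane) : Prop :=
  CNearCl 2 Ω A ∧
  (∀ x ∈ closure Ω, ‖A x‖ ≤ C₀) ∧
  (∀ x ∈ closure Ω, ‖fderiv ℝ A x‖ ≤ C₀) ∧
  (∀ x ∈ closure Ω, ‖fderiv ℝ (fderiv ℝ A) x‖ ≤ C₀) ∧
  (∀ x ∈ closure Ω, |curl2 A x - 1| ≤ C₀ * B ^ (-(1 : ℝ) / 4)) ∧
  (∀ x ∈ closure Ω, ‖fderiv ℝ (curl2 A) x‖ ≤ C₀ * B ^ (-(1 : ℝ) / 4)) ∧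
  (∀ x ∈ frontier Ω, curl2 A x = 1)

/-- The open unit disc. -/
def unitDisc : Set Plane := {x : Plane | x.1 ^ 2 + x.2 ^ 2 < 1}

/-- `Δ_B`: distance from `B/2 + ξ₀√B + δ₀` to the nearest integer. -/
def DeltaB (ξ₀ δ₀ B : ℝ) : ℝ :=
  sInf (Set.range (fun m : ℤ => |(m : ℝ) - B / 2 - ξ₀ * Real.sqrt B - δ₀|))

/-- Euclidean distance to the boundary of `Ω`. -/
def distBdry (Ω : Set Plane) (x : Plane) : ℝ :=
  sInf ((fun y => Real.sqrt (esq (x - y))) '' frontier Ω)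

end SC

section AuxOneSided

open Set Filter

variable {φ : ℝ → ℝ}

lemma aux_slope_mono (hφ : ConvexOn ℝ univ φ) (x : ℝ) {y z : ℝ}
    (hy : y ≠ x) (hz : z ≠ x) (hyz : y ≤ z) : slope φ x y ≤ slope φ x z := by
  simpa [slope_def_field] using
    hφ.secant_mono (mem_univ x) (mem_univ y) (mem_univ z) hy hz hyz

lemma aux_bddBelow (hφ : ConvexOn ℝ univ φ) (x : ℝ) :
    BddBelow (slope φ x '' Ioi x) := by
  refine ⟨slope φ x (x - 1), ?_⟩
  rintro _ ⟨y, hy, rfl⟩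
  exact aux_slope_mono hφ x (ne_of_lt (by linarith)) (mem_Ioi.mp hy).ne'
    (by linarith [mem_Ioi.mp hy])

lemma aux_bddAbove (hφ : ConvexOn ℝ univ φ) (x : ℝ) :
    BddAbove (slope φ x '' Iio x) := by
  refine ⟨slope φ x (x + 1), ?_⟩
  rintro _ ⟨y, hy, rfl⟩
  exact aux_slope_mono hφ x (ne_of_lt (mem_Iio.mp hy)) (ne_of_gt (by linarith))
    (by linarith [mem_Iio.mp hy])

lemma aux_hasDerivWithinAt_Ici (hφ : ConvexOn ℝ univ φ) (x : ℝ) :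
    HasDerivWithinAt φ (sInf (slope φ x '' Ioi x)) (Ici x) x := by
  have hmono : MonotoneOn (slope φ x) (Ioi x) := fun y hy z hz hyz =>
    aux_slope_mono hφ x (mem_Ioi.mp hy).ne' (mem_Ioi.mp hz).ne' hyz
  have := hmono.tendsto_nhdsGT (aux_bddBelow hφ x)
  rw [hasDerivWithinAt_iff_tendsto_slope, Ici_sdiff_left]
  exact this

lemma aux_hasDerivWithinAt_Iic (hφ : ConvexOn ℝ univ φ) (x : ℝ) :
    HasDerivWithinAt φ (sSup (slope φ x '' Iio x)) (Iic x) x := by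
  have hmono : MonotoneOn (slope φ x) (Iio x) := fun y hy z hz hyz =>
    aux_slope_mono hφ x (ne_of_lt (mem_Iio.mp hy)) (ne_of_lt (mem_Iio.mp hz)) hyz
  have := hmono.tendsto_nhdsLT (aux_bddAbove hφ x)
  rw [hasDerivWithinAt_iff_tendsto_slope, Iic_diff_right]
  exact this

lemma aux_sInf_le (hφ : ConvexOn ℝ univ φ) (x ε : ℝ) (hε : 0 < ε) :
    sInf (slope φ x '' Ioi x) ≤ slope φ x (x + ε) :=
  csInf_le (aux_bddBelow hφ x) ⟨x + ε, mem_Ioi.mpr (by linarith), rfl⟩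

lemma aux_le_sInf (hφ : ConvexOn ℝ univ φ) (x ε : ℝ) (hε : 0 < ε) :
    slope φ x (x - ε) ≤ sInf (slope φ x '' Ioi x) := by
  refine le_csInf ⟨slope φ x (x + 1), ⟨x + 1, mem_Ioi.mpr (by linarith), rfl⟩⟩ ?_
  rintro _ ⟨y, hy, rfl⟩
  exact aux_slope_mono hφ x (ne_of_lt (by linarith)) (mem_Ioi.mp hy).ne'
    (by linarith [mem_Ioi.mp hy])

lemma aux_le_sSup (hφ : ConvexOn ℝ univ φ) (x ε : ℝ) (hε : 0 < ε) :
    slope φ x (x - ε) ≤ sSup (slope φ x '' Iio x) :=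
  le_csSup (aux_bddAbove hφ x) ⟨x - ε, mem_Iio.mpr (by linarith), rfl⟩

lemma aux_sSup_le (hφ : ConvexOn ℝ univ φ) (x ε : ℝ) (hε : 0 < ε) :
    sSup (slope φ x '' Iio x) ≤ slope φ x (x + ε) := by
  refine csSup_le ⟨slope φ x (x - 1), ⟨x - 1, mem_Iio.mpr (by linarith), rfl⟩⟩ ?_
  rintro _ ⟨y, hy, rfl⟩
  exact aux_slope_mono hφ x (ne_of_lt (mem_Iio.mp hy)) (ne_of_gt (by linarith))
    (by linarith [mem_Iio.mp hy])

/-- The sandwich limit lemma. -/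
lemma aux_key (M α : ℝ) (f g : ℝ → ℝ) (hM : 0 ≤ M)
    (hg : ∀ ε ∈ Set.Ioo (-1 : ℝ) 1,
      Tendsto (fun β => g (β + ε) - g β) atTop (nhds 0))
    (hf : Tendsto (fun B => f B - (α * B + g B)) atTop (nhds 0))
    (F : ℝ → ℝ)
    (hF : ∀ ε, 0 < ε → ε < 1 → ∀ x,
      (f (x + ε) - f x) / ε - M * ε ≤ F x ∧ F x ≤ (f x - f (x - ε)) / ε + M * ε) :
    Tendsto F atTop (nhds α) := by
  have hp : ∀ ε, 0 < ε → ε < 1 →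
      Tendsto (fun B => (f (B + ε) - f B) / ε) atTop (nhds α) := by
    intro ε hε hε1
    have hr : Tendsto (fun B => (f (B + ε) - (α * (B + ε) + g (B + ε)))
        - (f B - (α * B + g B))) atTop (nhds 0) := by
      simpa using (hf.comp (tendsto_atTop_add_const_right atTop ε tendsto_id)).sub hf
    have hgg := hg ε ⟨by linarith, hε1⟩
    have h0 : Tendsto (fun B => ((f (B + ε) - (α * (B + ε) + g (B + ε)))
        - (f B - (α * B + g B)) + (g (B + ε) - g B)) / ε + α) atTop (nhds α) := by
      have := ((hr.add hgg).div_const ε).add_const α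
      simpa using this
    refine h0.congr fun B => ?_
    field_simp
    ring
  have hq : ∀ ε, 0 < ε → ε < 1 →
      Tendsto (fun B => (f B - f (B - ε)) / ε) atTop (nhds α) := by
    intro ε hε hε1
    have := (hp ε hε hε1).comp (tendsto_atTop_add_const_right atTop (-ε) tendsto_id)
    refine this.congr fun B => ?_
    simp only [Function.comp, id_eq]
    ring_nf
  rw [Metric.tendsto_atTop]
  intro δ hδ
  have hM1 : (0 : ℝ) < M + 1 := by linarith
  set ε := min (δ / (2 * (M + 1))) (1 / 2) with hεdef
  have hε : 0 < ε := lt_min (by positivity) (by norm_num)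
  have hε1 : ε < 1 := lt_of_le_of_lt (min_le_right _ _) (by norm_num)
  have hMε : M * ε ≤ δ / 2 := by
    have h1 : ε ≤ δ / (2 * (M + 1)) := min_le_left _ _
    have h2 : M * ε ≤ M * (δ / (2 * (M + 1))) := mul_le_mul_of_nonneg_left h1 hM
    have h3 : M * (δ / (2 * (M + 1))) ≤ δ / 2 := by
      rw [← mul_div_assoc, div_le_div_iff₀ (by positivity) (by norm_num : (0:ℝ) < 2)]
      nlinarith
    linarith
  obtain ⟨N₁, hN₁⟩ := (Metric.tendsto_atTop.1 (hp ε hε hε1)) (δ / 2) (by linarith)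
  obtain ⟨N₂, hN₂⟩ := (Metric.tendsto_atTop.1 (hq ε hε hε1)) (δ / 2) (by linarith)
  refine ⟨max N₁ N₂, fun B hB => ?_⟩
  have h1 := hN₁ B (le_trans (le_max_left _ _) hB)
  have h2 := hN₂ B (le_trans (le_max_right _ _) hB)
  rw [Real.dist_eq] at h1 h2 ⊢
  have hb := hF ε hε hε1 B
  rw [abs_lt] at h1 h2 ⊢
  constructor <;> [nlinarith [hb.1]; nlinarith [hb.2]]

end AuxOneSided


/-- If `f - M B²` is concave (so one-sided derivatives of `f` exist),
`g(β+ε) - g(β) → 0` for each fixed `ε ∈ (-1,1)`, and `f(B) - (αB + g(B)) → 0` as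
`B → ∞`, then both one-sided derivatives of `f` tend to `α` at infinity. -/
theorem onesided_derivatives_tend_to_slope
    (M α : ℝ) (f g : ℝ → ℝ) (hM : 0 ≤ M)
    (hconc : ConcaveOn ℝ Set.univ (fun B => f B - M * B ^ 2))
    (hg : ∀ ε ∈ Set.Ioo (-1 : ℝ) 1,
      Filter.Tendsto (fun β => g (β + ε) - g β) Filter.atTop (nhds 0))
    (hf : Filter.Tendsto (fun B => f B - (α * B + g B)) Filter.atTop (nhds 0)) :
    (∀ B : ℝ, DifferentiableWithinAt ℝ f (Set.Ici B) B ∧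
      DifferentiableWithinAt ℝ f (Set.Iic B) B) ∧
    Filter.Tendsto (fun B => derivWithin f (Set.Ici B) B) Filter.atTop (nhds α) ∧
    Filter.Tendsto (fun B => derivWithin f (Set.Iic B) B) Filter.atTop (nhds α) := by
  set φ : ℝ → ℝ := fun B => -(f B - M * B ^ 2) with hφdef
  have hφ : ConvexOn ℝ Set.univ φ := hconc.neg
  have hfeq : f = fun B => M * B ^ 2 - φ B := by
    funext B; simp [hφdef]
  -- derivative of the parabola part
  have hpar : ∀ x : ℝ, HasDerivWithinAt (fun B : ℝ => M * B ^ 2) (M * (2 * x)) (Set.Ici x) x :=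
    fun x => by simpa using (((hasDerivAt_pow 2 x).const_mul M).hasDerivWithinAt
      (s := Set.Ici x))
  have hpar' : ∀ x : ℝ, HasDerivWithinAt (fun B : ℝ => M * B ^ 2) (M * (2 * x)) (Set.Iic x) x :=
    fun x => by simpa using (((hasDerivAt_pow 2 x).const_mul M).hasDerivWithinAt
      (s := Set.Iic x))
  have hfR : ∀ x : ℝ, HasDerivWithinAt f
      (M * (2 * x) - sInf (slope φ x '' Set.Ioi x)) (Set.Ici x) x := by
    intro x; rw [hfeq]; exact (hpar x).sub (aux_hasDerivWithinAt_Ici hφ x)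
  have hfL : ∀ x : ℝ, HasDerivWithinAt f
      (M * (2 * x) - sSup (slope φ x '' Set.Iio x)) (Set.Iic x) x := by
    intro x; rw [hfeq]; exact (hpar' x).sub (aux_hasDerivWithinAt_Iic hφ x)
  have hdR : ∀ x : ℝ, derivWithin f (Set.Ici x) x
      = M * (2 * x) - sInf (slope φ x '' Set.Ioi x) :=
    fun x => (hfR x).derivWithin ((uniqueDiffOn_Ici x) x Set.self_mem_Ici)
  have hdL : ∀ x : ℝ, derivWithin f (Set.Iic x) x
      = M * (2 * x) - sSup (slope φ x '' Set.Iio x) :=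
    fun x => (hfL x).derivWithin ((uniqueDiffOn_Iic x) x Set.self_mem_Iic)
  -- slope identities
  have hslope_add : ∀ x ε : ℝ, 0 < ε →
      slope φ x (x + ε) = M * (2 * x) + M * ε - (f (x + ε) - f x) / ε := by
    intro x ε hε
    have hεne : ε ≠ 0 := ne_of_gt hε
    rw [slope_def_field, show x + ε - x = ε by ring]
    simp only [hφdef]
    field_simp
    ring
  have hslope_sub : ∀ x ε : ℝ, 0 < ε →
      slope φ x (x - ε) = M * (2 * x) - M * ε - (f x - f (x - ε)) / ε := by
    intro x ε hε
    have h := hslope_add (x - ε) ε hε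
    rw [show x - ε + ε = x by ring] at h
    rw [slope_comm, h]
    ring
  refine ⟨fun B => ⟨(hfR B).differentiableWithinAt, (hfL B).differentiableWithinAt⟩, ?_, ?_⟩
  · refine aux_key M α f g hM hg hf _ (fun ε hε hε1 x => ?_)
    rw [hdR x]
    constructor
    · have h := aux_sInf_le hφ x ε hε
      rw [hslope_add x ε hε] at h
      linarith
    · have h := aux_le_sInf hφ x ε hε
      rw [hslope_sub x ε hε] at h
      linarith
  · refine aux_key M α f g hM hg hf _ (fun ε hε hε1 x => ?_)
    rw [hdL x]
    constructor
    · have h := aux_sSup_le hφ x ε hε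
      rw [hslope_add x ε hε] at h
      linarith
    · have h := aux_le_sSup hφ x ε hε
      rw [hslope_sub x ε hε] at h
      linarith
end
end

section
/- Let A₁, A₂ : ℝ² → ℝ be of class C¹ and let γ₀ ∈ ℝ. Define φ(s,t) = ∫₀ᵗ A₂(s,τ) dτ + ∫₀ˢ A₁(σ,0) dσ − s·γ₀. Then φ is differentiable, ∂φ/∂t (s,t) = A₂(s,t) for all (s,t), and the function Ā₁ := A₁ − ∂φ/∂s satisfies Ā₁(s,0) = γ₀ and Ā₁(s,t) = γ₀ − ∫₀ᵗ ( ∂A₂/∂s − ∂A₁/∂t )(s,τ) dτ for all (s,t). Moreover, if there are continuous functions k : ℝ → ℝ and w : ℝ² → ℝ such that ∂A₂/∂s (s,t) − ∂A₁/∂t (s,t) = (1 − t·k(s))·(1 + t·w(s,t)) for all (s,t), then Ā₁(s,t) = γ₀ − t + t²·k(s)/2 − ∫₀ᵗ τ·(1 − τ·k(s))·w(s,τ) dτ, and for t ≥ 0 one has |Ā₁(s,t) − (γ₀ − t + t²·k(s)/2)| ≤ t²·(1/2 + t·|k(s)|/3)·sup_{0≤τ≤t} |w(s,τ)|. -/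
open MeasureTheory Filter Set Topology

noncomputable section

open intervalIntegral

private lemma abs_sub_le_uIcc {x c d : ℝ} (h : x ∈ Set.uIcc c (c + d)) : |x - c| ≤ |d| := by
  rcases Set.mem_uIcc.mp h with ⟨h1, h2⟩ | ⟨h1, h2⟩ <;>
  · have hd1 := le_abs_self d; have hd2 := neg_abs_le d
    rw [abs_le]; constructor <;> linarith

private lemma slice1 {A : ℝ × ℝ → ℝ} (hA : ContDiff ℝ 1 A) (s t : ℝ) :
    HasDerivAt (fun σ => A (σ, t)) (fderiv ℝ A (s, t) ((1:ℝ), (0:ℝ))) s :=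
  ((hA.differentiable one_ne_zero (s, t)).hasFDerivAt).comp_hasDerivAt s
    ((hasDerivAt_id s).prodMk (hasDerivAt_const s t))

private lemma parint_hasFDerivAt {A : ℝ × ℝ → ℝ} (hA : ContDiff ℝ 1 A) (p₀ : ℝ × ℝ) :
    HasFDerivAt (fun p : ℝ × ℝ => ∫ τ in (0:ℝ)..p.2, A (p.1, τ))
      ((∫ τ in (0:ℝ)..p₀.2, fderiv ℝ A (p₀.1, τ) ((1:ℝ),(0:ℝ))) • (ContinuousLinearMap.fst ℝ ℝ ℝ)
        + A p₀ • (ContinuousLinearMap.snd ℝ ℝ ℝ)) p₀ := by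
  obtain ⟨s₀, t₀⟩ := p₀
  set c : ℝ := ∫ τ in (0:ℝ)..t₀, fderiv ℝ A (s₀, τ) ((1:ℝ),(0:ℝ)) with hc
  have hAc : Continuous A := hA.continuous
  have hf'c : Continuous (fderiv ℝ A) := hA.continuous_fderiv one_ne_zero
  have hcont1 : ∀ s : ℝ, Continuous fun τ : ℝ => A (s, τ) :=
    fun s => hAc.comp (continuous_const.prodMk continuous_id)
  have hcontD : ∀ s : ℝ, Continuous fun τ : ℝ => fderiv ℝ A (s, τ) ((1:ℝ),(0:ℝ)) :=
    fun s => (hf'c.comp (continuous_const.prodMk continuous_id)).clm_apply continuous_const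
  rw [hasFDerivAt_iff_isLittleO_nhds_zero, Asymptotics.isLittleO_iff]
  intro C hC
  set ε : ℝ := C / (|t₀| + 1) with hε
  have hεpos : 0 < ε := div_pos hC (by positivity)
  -- uniform continuity of fderiv on a compact set
  set K : Set (ℝ × ℝ) := Metric.closedBall (s₀, t₀) (|t₀| + 2) with hK
  have hKc : IsCompact K := isCompact_closedBall _ _
  obtain ⟨δ₁, hδ₁pos, hδ₁⟩ := Metric.uniformContinuousOn_iff.mp
    (hKc.uniformContinuousOn_of_continuous hf'c.continuousOn) ε hεpos
  obtain ⟨δ₂, hδ₂pos, hδ₂⟩ := Metric.continuousAt_iff.mp (hAc.continuousAt (x := ((s₀, t₀) : ℝ × ℝ))) ε hεpos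
  refine Metric.eventually_nhds_iff.mpr ⟨min 1 (min δ₁ δ₂), by positivity, ?_⟩
  rintro ⟨a, b⟩ hh
  rw [dist_zero_right] at hh
  have hna : |a| ≤ ‖((a, b) : ℝ × ℝ)‖ := by
    simpa [Real.norm_eq_abs] using norm_fst_le ((a, b) : ℝ × ℝ)
  have hnb : |b| ≤ ‖((a, b) : ℝ × ℝ)‖ := by
    simpa [Real.norm_eq_abs] using norm_snd_le ((a, b) : ℝ × ℝ)
  set n : ℝ := ‖((a, b) : ℝ × ℝ)‖ with hn
  have hn1 : n < 1 := lt_of_lt_of_le hh (min_le_left _ _)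
  have hnδ₁ : n < δ₁ := lt_of_lt_of_le hh ((min_le_right _ _).trans (min_le_left _ _))
  have hnδ₂ : n < δ₂ := lt_of_lt_of_le hh ((min_le_right _ _).trans (min_le_right _ _))
  -- memberships in K
  have hmemK : ∀ x : ℝ × ℝ, |x.1 - s₀| ≤ 1 → |x.2 - t₀| ≤ |t₀| + 1 → x ∈ K := by
    rintro ⟨x1, x2⟩ h1 h2
    rw [hK, Metric.mem_closedBall, Prod.dist_eq, Real.dist_eq, Real.dist_eq]
    dsimp only at h1 h2 ⊢
    have := abs_nonneg t₀
    exact max_le (by linarith) (by linarith)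
  -- estimate for the first integral
  have est1 : ∀ τ ∈ Set.uIoc (0:ℝ) t₀,
      ‖A (s₀ + a, τ) - A (s₀, τ) - a * fderiv ℝ A (s₀, τ) ((1:ℝ),(0:ℝ))‖ ≤ ε * |a| := by
    intro τ hτ
    have hτ' : |τ - t₀| ≤ |t₀| := by
      rcases Set.mem_uIcc.mp (Set.uIoc_subset_uIcc hτ) with ⟨h1, h2⟩ | ⟨h1, h2⟩ <;>
      · have := le_abs_self t₀; have := neg_abs_le t₀
        rw [abs_le]; constructor <;> linarith
    set d : ℝ := fderiv ℝ A (s₀, τ) ((1:ℝ),(0:ℝ)) with hd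
    have key := Convex.norm_image_sub_le_of_norm_hasDerivWithin_le
      (f := fun σ => A (σ, τ) - σ * d)
      (f' := fun σ => fderiv ℝ A (σ, τ) ((1:ℝ),(0:ℝ)) - d)
      (s := Set.uIcc s₀ (s₀ + a)) (C := ε)
      (fun σ hσ => by
        have h := ((slice1 hA σ τ).sub ((hasDerivAt_id σ).mul_const d)).hasDerivWithinAt (s := Set.uIcc s₀ (s₀ + a))
        simp only [one_mul] at h
        exact h)
      (fun σ hσ => by
        have hσa : |σ - s₀| ≤ |a| := abs_sub_le_uIcc hσ
        have hm1 : ((σ, τ) : ℝ × ℝ) ∈ K := hmemK _ (by simp; linarith) (by simp; linarith)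
        have hm2 : ((s₀, τ) : ℝ × ℝ) ∈ K := hmemK _ (by simp) (by simp; linarith)
        have hdist : dist ((σ, τ) : ℝ × ℝ) (s₀, τ) < δ₁ := by
          rw [Prod.dist_eq, Real.dist_eq, Real.dist_eq, sub_self, abs_zero,
            max_eq_left (abs_nonneg _)]
          exact lt_of_le_of_lt (hσa.trans hna) hnδ₁
        have := hδ₁ _ hm1 _ hm2 hdist
        rw [dist_eq_norm] at this
        calc ‖fderiv ℝ A (σ, τ) ((1:ℝ),(0:ℝ)) - d‖
            = ‖(fderiv ℝ A (σ, τ) - fderiv ℝ A (s₀, τ)) ((1:ℝ),(0:ℝ))‖ := by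
              rw [ContinuousLinearMap.sub_apply]
          _ ≤ ‖fderiv ℝ A (σ, τ) - fderiv ℝ A (s₀, τ)‖ * ‖((1:ℝ),(0:ℝ))‖ :=
              ContinuousLinearMap.le_opNorm _ _
          _ ≤ ε := by rw [show ‖((1:ℝ),(0:ℝ))‖ = 1 by simp [Prod.norm_def], mul_one]; exact this.le)
      (convex_uIcc _ _) (Set.left_mem_uIcc) (Set.right_mem_uIcc)
    have : A (s₀ + a, τ) - (s₀ + a) * d - (A (s₀, τ) - s₀ * d)
        = A (s₀ + a, τ) - A (s₀, τ) - a * d := by ring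
    rw [this] at key
    calc ‖A (s₀ + a, τ) - A (s₀, τ) - a * d‖ ≤ ε * ‖s₀ + a - s₀‖ := key
      _ = ε * |a| := by rw [Real.norm_eq_abs]; ring_nf
  have est2 : ∀ τ ∈ Set.uIoc t₀ (t₀ + b), ‖A (s₀ + a, τ) - A (s₀, t₀)‖ ≤ ε := by
    intro τ hτ
    have hτ' : |τ - t₀| ≤ |b| := abs_sub_le_uIcc (Set.uIoc_subset_uIcc hτ)
    have hdist : dist ((s₀ + a, τ) : ℝ × ℝ) (s₀, t₀) < δ₂ := by
      rw [Prod.dist_eq, Real.dist_eq, Real.dist_eq]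
      have ha' : |s₀ + a - s₀| = |a| := by ring_nf
      refine lt_of_le_of_lt (max_le ?_ ?_) hnδ₂
      · rw [ha']; exact hna
      · exact hτ'.trans hnb
    have h2 := hδ₂ hdist
    rw [dist_eq_norm] at h2
    exact h2.le
  have int1 : ∀ (s t1 t2 : ℝ), IntervalIntegrable (fun τ => A (s, τ)) volume t1 t2 :=
    fun s t1 t2 => (hcont1 s).intervalIntegrable _ _
  have int2 : IntervalIntegrable (fun τ => a * fderiv ℝ A (s₀, τ) ((1:ℝ),(0:ℝ))) volume 0 t₀ :=
    (continuous_const.mul (hcontD s₀)).intervalIntegrable _ _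
  have hsplit : (∫ τ in (0:ℝ)..(t₀ + b), A (s₀ + a, τ))
      = (∫ τ in (0:ℝ)..t₀, A (s₀ + a, τ)) + ∫ τ in t₀..(t₀ + b), A (s₀ + a, τ) :=
    (integral_add_adjacent_intervals (int1 _ _ _) (int1 _ _ _)).symm
  have hI1 : (∫ τ in (0:ℝ)..t₀,
        (A (s₀ + a, τ) - A (s₀, τ) - a * fderiv ℝ A (s₀, τ) ((1:ℝ),(0:ℝ))))
      = (∫ τ in (0:ℝ)..t₀, A (s₀ + a, τ)) - (∫ τ in (0:ℝ)..t₀, A (s₀, τ)) - a * c := by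
    rw [integral_sub ((int1 _ _ _).sub (int1 _ _ _)) int2, integral_sub (int1 _ _ _) (int1 _ _ _),
      intervalIntegral.integral_const_mul, hc]
  have hI2 : (∫ τ in t₀..(t₀ + b), (A (s₀ + a, τ) - A (s₀, t₀)))
      = (∫ τ in t₀..(t₀ + b), A (s₀ + a, τ)) - b * A (s₀, t₀) := by
    rw [integral_sub (int1 _ _ _) intervalIntegrable_const, intervalIntegral.integral_const]
    rw [smul_eq_mul]; ring
  have b1 : ‖(∫ τ in (0:ℝ)..t₀,
        (A (s₀ + a, τ) - A (s₀, τ) - a * fderiv ℝ A (s₀, τ) ((1:ℝ),(0:ℝ))))‖ ≤ ε * |a| * |t₀| := by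
    have := norm_integral_le_of_norm_le_const est1
    simpa using this
  have b2 : ‖(∫ τ in t₀..(t₀ + b), (A (s₀ + a, τ) - A (s₀, t₀)))‖ ≤ ε * |b| := by
    have := norm_integral_le_of_norm_le_const est2
    simpa using this
  have happ : ((c • (ContinuousLinearMap.fst ℝ ℝ ℝ)
      + A (s₀, t₀) • (ContinuousLinearMap.snd ℝ ℝ ℝ)) : ℝ × ℝ →L[ℝ] ℝ) (a, b)
      = c * a + A (s₀, t₀) * b := by
    simp [ContinuousLinearMap.smul_apply, smul_eq_mul]
  have hCε : ε * (|t₀| + 1) = C := div_mul_cancel₀ C (by positivity)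
  calc ‖(∫ τ in (0:ℝ)..((s₀, t₀) + (a, b)).2, A (((s₀, t₀) + (a, b)).1, τ))
        - (∫ τ in (0:ℝ)..t₀, A (s₀, τ))
        - ((c • (ContinuousLinearMap.fst ℝ ℝ ℝ)
            + A (s₀, t₀) • (ContinuousLinearMap.snd ℝ ℝ ℝ)) : ℝ × ℝ →L[ℝ] ℝ) (a, b)‖
      = ‖(∫ τ in (0:ℝ)..t₀,
            (A (s₀ + a, τ) - A (s₀, τ) - a * fderiv ℝ A (s₀, τ) ((1:ℝ),(0:ℝ))))
          + (∫ τ in t₀..(t₀ + b), (A (s₀ + a, τ) - A (s₀, t₀)))‖ := by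
        rw [happ, hI1, hI2]
        have : ((s₀, t₀) + (a, b) : ℝ × ℝ) = (s₀ + a, t₀ + b) := rfl
        rw [this]
        dsimp only
        rw [hsplit]
        ring_nf
    _ ≤ ε * |a| * |t₀| + ε * |b| := (norm_add_le _ _).trans (add_le_add b1 b2)
    _ ≤ C * ‖((a, b) : ℝ × ℝ)‖ := by
        rw [← hn, ← hCε]
        nlinarith [hεpos.le, abs_nonneg t₀,
          mul_le_mul_of_nonneg_left hna (mul_nonneg hεpos.le (abs_nonneg t₀)),
          mul_le_mul_of_nonneg_left hnb hεpos.le]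

private lemma slice2 {A : ℝ × ℝ → ℝ} (hA : ContDiff ℝ 1 A) (s t : ℝ) :
    HasDerivAt (fun τ => A (s, τ)) (fderiv ℝ A (s, t) ((0:ℝ), (1:ℝ))) t :=
  ((hA.differentiable one_ne_zero (s, t)).hasFDerivAt).comp_hasDerivAt t
    ((hasDerivAt_const t s).prodMk (hasDerivAt_id t))


/-- The gauge-choice computation in boundary coordinates: with
`φ(s,t) = ∫₀ᵗ A₂(s,τ)dτ + ∫₀ˢ A₁(σ,0)dσ - sγ₀`, one has `∂φ/∂t = A₂`,
`Ā₁ := A₁ - ∂φ/∂s` satisfies `Ā₁(s,0) = γ₀`,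
`Ā₁(s,t) = γ₀ - ∫₀ᵗ (∂ₛA₂ - ∂ₜA₁)(s,τ)dτ`, and if
`∂ₛA₂ - ∂ₜA₁ = (1 - t k(s))(1 + t w(s,t))` then the explicit expansion and
remainder bound hold. -/
theorem gauge_choice_boundary_coordinates
    (A₁ A₂ : SC.Plane → ℝ) (hA₁ : ContDiff ℝ 1 A₁) (hA₂ : ContDiff ℝ 1 A₂)
    (γ₀ : ℝ) (φ : SC.Plane → ℝ)
    (hφ : φ = fun p => (∫ τ in (0 : ℝ)..p.2, A₂ (p.1, τ)) +
      (∫ σ in (0 : ℝ)..p.1, A₁ (σ, 0)) - p.1 * γ₀)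
    (Abar : SC.Plane → ℝ)
    (hAbar : Abar = fun p => A₁ p - fderiv ℝ φ p ((1 : ℝ), (0 : ℝ))) :
    Differentiable ℝ φ ∧
    (∀ s t : ℝ, fderiv ℝ φ (s, t) ((0 : ℝ), (1 : ℝ)) = A₂ (s, t)) ∧
    (∀ s : ℝ, Abar (s, 0) = γ₀) ∧
    (∀ s t : ℝ, Abar (s, t) = γ₀ - ∫ τ in (0 : ℝ)..t,
        (fderiv ℝ A₂ (s, τ) ((1 : ℝ), (0 : ℝ)) -
         fderiv ℝ A₁ (s, τ) ((0 : ℝ), (1 : ℝ)))) ∧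
    (∀ k : ℝ → ℝ, ∀ w : SC.Plane → ℝ, Continuous k → Continuous w →
      (∀ s t : ℝ, fderiv ℝ A₂ (s, t) ((1 : ℝ), (0 : ℝ)) -
          fderiv ℝ A₁ (s, t) ((0 : ℝ), (1 : ℝ))
            = (1 - t * k s) * (1 + t * w (s, t))) →
      (∀ s t : ℝ, Abar (s, t) = γ₀ - t + t ^ 2 * k s / 2
          - ∫ τ in (0 : ℝ)..t, τ * (1 - τ * k s) * w (s, τ)) ∧
      (∀ s : ℝ, ∀ t : ℝ, 0 ≤ t →
        |Abar (s, t) - (γ₀ - t + t ^ 2 * k s / 2)|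
          ≤ t ^ 2 * (1 / 2 + t * |k s| / 3) *
              sSup ((fun τ => |w (s, τ)|) '' Set.Icc 0 t))) := by
  have hcA₁0 : Continuous fun σ : ℝ => A₁ (σ, 0) :=
    hA₁.continuous.comp (continuous_id.prodMk continuous_const)
  have hcontD2 : ∀ s : ℝ, Continuous fun τ : ℝ => fderiv ℝ A₁ (s, τ) ((0:ℝ),(1:ℝ)) :=
    fun s => ((hA₁.continuous_fderiv one_ne_zero).comp
      (continuous_const.prodMk continuous_id)).clm_apply continuous_const
  have hcontD1 : ∀ s : ℝ, Continuous fun τ : ℝ => fderiv ℝ A₂ (s, τ) ((1:ℝ),(0:ℝ)) :=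
    fun s => ((hA₂.continuous_fderiv one_ne_zero).comp
      (continuous_const.prodMk continuous_id)).clm_apply continuous_const
  -- derivative of φ
  have hφeq : φ = fun p : ℝ × ℝ => (∫ τ in (0 : ℝ)..p.2, A₂ (p.1, τ)) +
      ((∫ σ in (0 : ℝ)..p.1, A₁ (σ, 0)) - p.1 * γ₀) := by
    rw [hφ]; funext p; ring
  have hφd : ∀ p : ℝ × ℝ, HasFDerivAt φ
      (((∫ τ in (0:ℝ)..p.2, fderiv ℝ A₂ (p.1, τ) ((1:ℝ),(0:ℝ))) • (ContinuousLinearMap.fst ℝ ℝ ℝ)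
        + A₂ p • (ContinuousLinearMap.snd ℝ ℝ ℝ))
        + (A₁ (p.1, 0) - γ₀) • (ContinuousLinearMap.fst ℝ ℝ ℝ)) p := by
    intro p
    rw [hφeq]
    refine (parint_hasFDerivAt hA₂ p).add ?_
    have h1 : HasDerivAt (fun u : ℝ => (∫ σ in (0:ℝ)..u, A₁ (σ, 0)) - u * γ₀)
        (A₁ (p.1, 0) - γ₀) p.1 := by
      have h := ((hcA₁0.integral_hasStrictDerivAt 0 p.1).hasDerivAt.sub
        ((hasDerivAt_id p.1).mul_const γ₀))
      simp only [one_mul] at h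
      exact h
    exact h1.comp_hasFDerivAt p (hasFDerivAt_fst)
  have hfderiv : ∀ p : ℝ × ℝ, fderiv ℝ φ p =
      (((∫ τ in (0:ℝ)..p.2, fderiv ℝ A₂ (p.1, τ) ((1:ℝ),(0:ℝ))) • (ContinuousLinearMap.fst ℝ ℝ ℝ)
        + A₂ p • (ContinuousLinearMap.snd ℝ ℝ ℝ))
        + (A₁ (p.1, 0) - γ₀) • (ContinuousLinearMap.fst ℝ ℝ ℝ)) :=
    fun p => (hφd p).fderiv
  have hds : ∀ s t : ℝ, fderiv ℝ φ (s, t) ((1:ℝ),(0:ℝ))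
      = (∫ τ in (0:ℝ)..t, fderiv ℝ A₂ (s, τ) ((1:ℝ),(0:ℝ))) + (A₁ (s, 0) - γ₀) := by
    intro s t
    rw [hfderiv (s, t)]
    simp [smul_eq_mul]
  have hdt : ∀ s t : ℝ, fderiv ℝ φ (s, t) ((0:ℝ),(1:ℝ)) = A₂ (s, t) := by
    intro s t
    rw [hfderiv (s, t)]
    simp [smul_eq_mul]
  -- FTC in the second variable for A₁
  have ftc : ∀ s t : ℝ, (∫ τ in (0:ℝ)..t, fderiv ℝ A₁ (s, τ) ((0:ℝ),(1:ℝ)))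
      = A₁ (s, t) - A₁ (s, 0) := fun s t =>
    intervalIntegral.integral_eq_sub_of_hasDerivAt (fun τ _ => slice2 hA₁ s τ)
      ((hcontD2 s).intervalIntegrable _ _)
  have part4 : ∀ s t : ℝ, Abar (s, t) = γ₀ - ∫ τ in (0 : ℝ)..t,
      (fderiv ℝ A₂ (s, τ) ((1:ℝ),(0:ℝ)) - fderiv ℝ A₁ (s, τ) ((0:ℝ),(1:ℝ))) := by
    intro s t
    rw [hAbar]
    dsimp only
    rw [hds s t, integral_sub ((hcontD1 s).intervalIntegrable _ _)
      ((hcontD2 s).intervalIntegrable _ _), ftc s t]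
    ring
  refine ⟨fun p => (hφd p).differentiableAt, hdt, ?_, part4, ?_⟩
  · intro s
    rw [hAbar]
    dsimp only
    rw [hds s 0]
    simp
  · intro k w hk hw hfact
    have hcw : ∀ s : ℝ, Continuous fun τ : ℝ => w (s, τ) :=
      fun s => hw.comp (continuous_const.prodMk continuous_id)
    have hcint : ∀ s : ℝ, Continuous fun τ : ℝ => τ * (1 - τ * k s) * w (s, τ) := by
      intro s
      exact (continuous_id.mul (continuous_const.sub
        (continuous_id.mul continuous_const))).mul (hcw s)
    have part5a : ∀ s t : ℝ, Abar (s, t) = γ₀ - t + t ^ 2 * k s / 2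
        - ∫ τ in (0 : ℝ)..t, τ * (1 - τ * k s) * w (s, τ) := by
      intro s t
      have hcongr : (∫ τ in (0:ℝ)..t,
          (fderiv ℝ A₂ (s, τ) ((1:ℝ),(0:ℝ)) - fderiv ℝ A₁ (s, τ) ((0:ℝ),(1:ℝ))))
          = ∫ τ in (0:ℝ)..t, ((1 - τ * k s) + τ * (1 - τ * k s) * w (s, τ)) :=
        integral_congr (fun τ _ => by rw [hfact s τ]; ring)
      have hval : (∫ τ in (0:ℝ)..t, ((1 - τ * k s) + τ * (1 - τ * k s) * w (s, τ)))
          = (t - t ^ 2 * k s / 2) + ∫ τ in (0:ℝ)..t, τ * (1 - τ * k s) * w (s, τ) := by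
        have h1 : IntervalIntegrable (fun τ : ℝ => 1 - τ * k s) volume 0 t :=
          Continuous.intervalIntegrable (by fun_prop) _ _
        have h2 : IntervalIntegrable (fun τ : ℝ => τ * k s) volume 0 t :=
          Continuous.intervalIntegrable (by fun_prop) _ _
        rw [integral_add h1 ((hcint s).intervalIntegrable _ _)]
        congr 1
        rw [integral_sub intervalIntegrable_const h2,
          intervalIntegral.integral_const, intervalIntegral.integral_mul_const, integral_id]
        rw [smul_eq_mul]; ring
      rw [part4 s t, hcongr, hval]
      ring
    refine ⟨part5a, ?_⟩
    intro s t ht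
    set M : ℝ := sSup ((fun τ => |w (s, τ)|) '' Set.Icc 0 t) with hM
    have hbdd : BddAbove ((fun τ => |w (s, τ)|) '' Set.Icc 0 t) :=
      (isCompact_Icc.image_of_continuousOn (hcw s).abs.continuousOn).bddAbove
    have hMb : ∀ τ ∈ Set.Icc (0:ℝ) t, |w (s, τ)| ≤ M :=
      fun τ hτ => le_csSup hbdd ⟨τ, hτ, rfl⟩
    have hM0 : 0 ≤ M := le_trans (abs_nonneg _) (hMb 0 ⟨le_rfl, ht⟩)
    have heq : Abar (s, t) - (γ₀ - t + t ^ 2 * k s / 2)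
        = -∫ τ in (0:ℝ)..t, τ * (1 - τ * k s) * w (s, τ) := by
      rw [part5a s t]; ring
    rw [heq, abs_neg]
    have hgc : Continuous fun τ : ℝ => M * τ + (M * |k s|) * τ ^ 2 := by fun_prop
    have hbound : ∀ᵐ τ ∂(volume.restrict (Set.uIoc (0:ℝ) t)),
        ‖τ * (1 - τ * k s) * w (s, τ)‖ ≤ M * τ + (M * |k s|) * τ ^ 2 := by
      refine (ae_restrict_mem measurableSet_uIoc).mono (fun τ hτ => ?_)
      rw [Set.uIoc_of_le ht] at hτ
      obtain ⟨hτ0, hτt⟩ := hτ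
      have hk1 : |1 - τ * k s| ≤ 1 + τ * |k s| := by
        have h1 := le_abs_self (k s); have h2 := neg_abs_le (k s)
        rw [abs_le]; constructor <;> nlinarith
      have hwb : |w (s, τ)| ≤ M := hMb τ ⟨hτ0.le, hτt⟩
      calc ‖τ * (1 - τ * k s) * w (s, τ)‖ = (|τ| * |1 - τ * k s|) * |w (s, τ)| := by
            rw [Real.norm_eq_abs, abs_mul, abs_mul]
        _ ≤ (τ * (1 + τ * |k s|)) * M := by
            refine mul_le_mul ?_ hwb (abs_nonneg _) (by positivity)
            rw [abs_of_pos hτ0]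
            exact mul_le_mul_of_nonneg_left hk1 hτ0.le
        _ = M * τ + (M * |k s|) * τ ^ 2 := by ring
    have hle := intervalIntegral.norm_integral_le_of_norm_le ht
      (by rw [← ae_restrict_iff' measurableSet_Ioc, ← Set.uIoc_of_le ht]; exact hbound) (hgc.intervalIntegrable _ _)
    have hgval : (∫ τ in (0:ℝ)..t, (M * τ + (M * |k s|) * τ ^ 2))
        = M * (t ^ 2 / 2) + (M * |k s|) * (t ^ 3 / 3) := by
      have h1 : IntervalIntegrable (fun τ : ℝ => M * τ) volume 0 t :=
        Continuous.intervalIntegrable (by fun_prop) _ _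
      have h2 : IntervalIntegrable (fun τ : ℝ => (M * |k s|) * τ ^ 2) volume 0 t :=
        Continuous.intervalIntegrable (by fun_prop) _ _
      rw [integral_add h1 h2, intervalIntegral.integral_const_mul, intervalIntegral.integral_const_mul, integral_id, integral_pow]
      norm_num
    rw [hgval] at hle
    calc ‖∫ τ in (0:ℝ)..t, τ * (1 - τ * k s) * w (s, τ)‖
        ≤ |M * (t ^ 2 / 2) + (M * |k s|) * (t ^ 3 / 3)| := hle.trans (le_abs_self _)
      _ = M * (t ^ 2 / 2) + (M * |k s|) * (t ^ 3 / 3) := abs_of_nonneg (by positivity)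
      _ = t ^ 2 * (1 / 2 + t * |k s| / 3) * M := by ring
end
end
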